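/- arXiv:2605.06921 — 4 statements merged into one kernel-verified Lean document; each statement's English description precedes it below -/
import Mathlib

section
/- Let h(x) = 1^T x - (γ/2) x^T A x be the MIS QUBO objective on [0,1]^n with penalty γ > 1, where A is the adjacency matrix of a simple graph G. If x ∈ {0,1}^n is the indicator vector of a maximal independent set I, then x is a fixed point of projected gradient ascent: x = Π_{[0,1]^n}(x + α ∇h(x)) for every step size α > 0. -/
/-- Coordinatewise projection (clamping) onto the box `[0,1]`. -/
noncomputable def clamp01 (a : ℝ) : ℝ := max 0 (min 1 a)

/-- The indicator vector of a maximal independent set is a fixed point of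
projected gradient ascent for the MIS QUBO `h(x) = 1ᵀx - (γ/2) xᵀAx`
(for which `∇h(x) = 1 - γ A x`), for every step size `α > 0` and penalty
`γ > 1`. -/
theorem stmt_1 {n : ℕ} (A : Matrix (Fin n) (Fin n) ℝ)
    (hA01 : ∀ i j, A i j = 0 ∨ A i j = 1)
    (hAsymm : A.IsSymm)
    (hAdiag : ∀ i, A i i = 0)
    (γ : ℝ) (hγ : 1 < γ)
    (I : Finset (Fin n))
    (x : Fin n → ℝ)
    (hx : ∀ v, x v = if v ∈ I then 1 else 0)
    (hind : ∀ u ∈ I, ∀ v ∈ I, A u v = 0)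
    (hmax : ∀ v : Fin n, v ∉ I → ∃ u ∈ I, A v u = 1)
    (α : ℝ) (hα : 0 < α) :
    (fun i => clamp01 (x i + α * (1 - γ * (A.mulVec x) i))) = x := by
  funext i
  have hterm : ∀ j, A i j * x j = if j ∈ I then A i j else 0 := by
    intro j
    rw [hx j]
    split <;> simp
  by_cases hi : i ∈ I
  · have hzero : (A.mulVec x) i = 0 := by
      unfold Matrix.mulVec dotProduct
      apply Finset.sum_eq_zero
      intro j _
      rw [hterm j]
      split
      · exact hind i hi j ‹_›
      · rfl
    rw [hzero, hx i, if_pos hi]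
    unfold clamp01
    have : (0:ℝ) < α := hα
    rw [mul_zero, sub_zero, mul_one]
    rw [min_eq_left (by linarith), max_eq_right (by norm_num)]
  · obtain ⟨u, hu, hAu⟩ := hmax i hi
    have hge : (1:ℝ) ≤ (A.mulVec x) i := by
      unfold Matrix.mulVec dotProduct
      calc (1:ℝ) = A i u * x u := by rw [hAu, hx u, if_pos hu]; ring
      _ ≤ ∑ j, A i j * x j := by
          apply Finset.single_le_sum (f := fun j => A i j * x j)
          · intro j _
            rw [hterm j]
            split
            · rcases hA01 i j with h | h <;> simp [h]
            · rfl
          · exact Finset.mem_univ u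
    rw [hx i, if_neg hi]
    unfold clamp01
    have h1 : 1 - γ * (A.mulVec x) i ≤ 1 - γ := by nlinarith
    have h2 : 0 + α * (1 - γ * (A.mulVec x) i) ≤ 0 := by nlinarith
    rw [max_eq_left]
    exact le_trans (min_le_right _ _) h2
end

section
/- Let f_P(x) = x^T (L + λI) x with λ > 0, where L is the Laplacian of a simple graph. Then every binary point x ∈ {-1,1}^n is a fixed point of projected gradient ascent on [-1,1]^n: Π_{[-1,1]^n}(x + α ∇f_P(x)) = x for every step size α > 0. -/
/-- Coordinatewise projection (clamping) onto the box `[-1,1]`. -/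
noncomputable def clamp (a : ℝ) : ℝ := max (-1) (min 1 a)

/-- For `f_P(x) = xᵀ (L + λI) x` with `λ > 0`, where `L` is the Laplacian of a
simple graph (so `∇f_P(x) = 2 (L + λI) x`), every binary point `x ∈ {-1,1}ⁿ`
is a fixed point of projected gradient ascent on `[-1,1]ⁿ`, for every step
size `α > 0`. -/
theorem stmt_5 {n : ℕ} (A : Matrix (Fin n) (Fin n) ℝ)
    (hA01 : ∀ i j, A i j = 0 ∨ A i j = 1)
    (hAsymm : A.IsSymm)
    (hAdiag : ∀ i, A i i = 0)
    (L : Matrix (Fin n) (Fin n) ℝ)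
    (hL : L = Matrix.diagonal (fun i => ∑ j, A i j) - A)
    (lam : ℝ) (hlam : 0 < lam)
    (x : Fin n → ℝ)
    (hx : ∀ i, x i = 1 ∨ x i = -1)
    (α : ℝ) (hα : 0 < α) :
    (fun i => clamp (x i + α * (2 * ((L + lam • (1 : Matrix (Fin n) (Fin n) ℝ)).mulVec x) i)))
      = x := by
  have key : ∀ i, lam ≤ x i * ((L + lam • (1 : Matrix (Fin n) (Fin n) ℝ)).mulVec x) i := by
    intro i
    have hv : ((L + lam • (1 : Matrix (Fin n) (Fin n) ℝ)).mulVec x) i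
        = (∑ j, A i j * (x i - x j)) + lam * x i := by
      simp only [hL, Matrix.mulVec, dotProduct, Matrix.sub_apply, Matrix.add_apply,
        Matrix.smul_apply, Matrix.one_apply, Matrix.diagonal_apply, smul_eq_mul, mul_ite,
        mul_one, mul_zero, ite_mul, zero_mul, sub_mul, add_mul, Finset.sum_add_distrib,
        Finset.sum_sub_distrib, Finset.sum_ite_eq, Finset.mem_univ, if_true,
        Finset.sum_mul, mul_sub]
    have hxi2 : x i * x i = 1 := by rcases hx i with h | h <;> simp [h]
    have hsum : 0 ≤ ∑ j, A i j * (x i * x i - x i * x j) := by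
      apply Finset.sum_nonneg
      intro j _
      rcases hA01 i j with h | h
      · simp [h]
      · have : x i * x j ≤ 1 := by
          rcases hx i with h1 | h1 <;> rcases hx j with h2 | h2 <;> simp [h1, h2]
        rw [hxi2]
        nlinarith
    have : x i * ((L + lam • (1 : Matrix (Fin n) (Fin n) ℝ)).mulVec x) i
        = (∑ j, A i j * (x i * x i - x i * x j)) + lam := by
      rw [hv, mul_add, Finset.mul_sum,
        show x i * (lam * x i) = lam * (x i * x i) by ring, hxi2, mul_one]
      congr 1
      apply Finset.sum_congr rfl
      intro j _
      linear_combination A i j * hxi2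
    rw [this]
    linarith
  funext i
  have hk := key i
  set v := ((L + lam • (1 : Matrix (Fin n) (Fin n) ℝ)).mulVec x) i with hvdef
  rcases hx i with h | h
  · have hv0 : lam ≤ v := by rw [h] at hk; linarith
    have : (1:ℝ) ≤ x i + α * (2 * v) := by rw [h]; nlinarith
    unfold clamp
    rw [min_eq_left this]
    rw [h]
    norm_num
  · have hv0 : v ≤ -lam := by rw [h] at hk; nlinarith
    have hle : x i + α * (2 * v) ≤ -1 := by rw [h]; nlinarith
    unfold clamp
    rw [min_eq_right (by linarith : x i + α * (2 * v) ≤ 1)]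
    rw [max_eq_left hle, h]
end

section
/- Let A be the adjacency matrix of a simple graph, λ ∈ (0,2), and f_B(x) = -λ 1^T x - x^T A x. If x ∈ {-1,1}^n is 1-flip repairable for f_A (i.e., x_i (A x)_i > 0 for some i), then at that index x_i ∇_i f_B(x) ≤ -2 + λ < 0; consequently x is not a fixed point of projected gradient ascent on [-1,1]^n. -/
open Matrix

/-- For `f_B(x) = -λ 1ᵀx - xᵀAx` with `λ ∈ (0,2)` (so
`∇f_B(x) = -2Ax - λ1`): if a binary `x ∈ {-1,1}ⁿ` is 1-flip repairable for
`f_A`, i.e., `x_i (A x)_i > 0` for some `i`, then at every such index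
`x_i ∇_i f_B(x) ≤ -2 + λ < 0`, and consequently `x` is not a fixed point of
projected gradient ascent on `[-1,1]ⁿ`. -/
theorem stmt_10 {n : ℕ} (A : Matrix (Fin n) (Fin n) ℝ)
    (hA01 : ∀ i j, A i j = 0 ∨ A i j = 1)
    (hAsymm : A.IsSymm)
    (hAdiag : ∀ i, A i i = 0)
    (lam : ℝ) (hlam0 : 0 < lam) (hlam2 : lam < 2)
    (x : Fin n → ℝ)
    (hx : ∀ j, x j = 1 ∨ x j = -1) :
    (∀ i : Fin n, 0 < x i * (A.mulVec x) i →
      x i * (-2 * (A.mulVec x) i - lam) ≤ -2 + lam ∧ (-2 + lam < 0)) ∧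
    ((∃ i : Fin n, 0 < x i * (A.mulVec x) i) →
      ∀ α : ℝ, 0 < α →
        (fun i => clamp (x i + α * (-2 * (A.mulVec x) i - lam))) ≠ x) := by
  -- integrality: x i * (A x) i is an integer
  have key : ∀ i, ∃ m : ℤ, x i * (A.mulVec x) i = (m : ℝ) := by
    intro i
    have hterm : ∀ j, ∃ m : ℤ, x i * (A i j * x j) = (m : ℝ) := by
      intro j
      rcases hA01 i j with h | h
      · exact ⟨0, by simp [h]⟩
      · rcases hx i with hi | hi <;> rcases hx j with hj | hj
        · exact ⟨1, by simp [h, hi, hj]⟩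
        · exact ⟨-1, by simp [h, hi, hj]⟩
        · exact ⟨-1, by simp [h, hi, hj]⟩
        · exact ⟨1, by simp [h, hi, hj]⟩
    choose m hm using hterm
    refine ⟨∑ j, m j, ?_⟩
    have : x i * (A.mulVec x) i = ∑ j, x i * (A i j * x j) := by
      simp [Matrix.mulVec, dotProduct, Finset.mul_sum]
    rw [this]
    push_cast
    exact Finset.sum_congr rfl fun j _ => hm j
  have hge1 : ∀ i, 0 < x i * (A.mulVec x) i → 1 ≤ x i * (A.mulVec x) i := by
    intro i hpos
    obtain ⟨m, hm⟩ := key i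
    rw [hm] at hpos ⊢
    exact_mod_cast (by exact_mod_cast hpos : (0 : ℤ) < m)
  have habs : ∀ i, 0 < x i * (A.mulVec x) i →
      x i * (-2 * (A.mulVec x) i - lam) ≤ -2 + lam := by
    intro i hpos
    have h1 := hge1 i hpos
    have hxi : x i = 1 ∨ x i = -1 := hx i
    have hxle : -lam * x i ≤ lam := by
      rcases hxi with h | h <;> rw [h] <;> nlinarith
    calc x i * (-2 * (A.mulVec x) i - lam)
        = -2 * (x i * (A.mulVec x) i) + (-lam * x i) := by ring
      _ ≤ -2 * 1 + lam := by linarith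
      _ = -2 + lam := by ring
  constructor
  · intro i hpos
    exact ⟨habs i hpos, by linarith⟩
  · rintro ⟨i, hpos⟩ α hα hfix
    have h := congrFun hfix i
    have hgi : x i * (-2 * (A.mulVec x) i - lam) ≤ -2 + lam := habs i hpos
    have hneg : -2 + lam < 0 := by linarith
    set g := -2 * (A.mulVec x) i - lam with hg
    rcases hx i with hxi | hxi
    · -- x i = 1, g < 0, clamp (1 + α g) < 1
      have hglt : g < 0 := by rw [hxi] at hgi; linarith
      have hv : x i + α * g < 1 := by rw [hxi]; nlinarith
      have : clamp (x i + α * g) < 1 := by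
        unfold clamp
        exact max_lt (by norm_num) (lt_of_le_of_lt (min_le_right _ _) hv)
      rw [h, hxi] at this
      exact lt_irrefl _ this
    · -- x i = -1, g > 0, clamp (-1 + α g) > -1
      have hggt : 0 < g := by rw [hxi] at hgi; nlinarith
      have hv : -1 < x i + α * g := by rw [hxi]; nlinarith
      have : -1 < clamp (x i + α * g) := by
        unfold clamp
        apply lt_max_of_lt_right
        exact lt_min (by norm_num) hv
      rw [h, hxi] at this
      exact lt_irrefl _ this
end

section
/- Let f_B(x) = -λ 1^T x - x^T A x with 0 < λ < 2, where A is the adjacency matrix of a simple graph. Then every local maximizer x* of f_B over the box [-1,1]^n is binary: x* ∈ {-1,1}^n. -/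
open Matrix

/-- For `f_B(x) = -λ 1ᵀx - xᵀAx` with `0 < λ < 2`, where `A` is the adjacency
matrix of a simple graph, every local maximizer of `f_B` over the box
`[-1,1]ⁿ` is binary. -/
theorem stmt_14 {n : ℕ} (A : Matrix (Fin n) (Fin n) ℝ)
    (hA01 : ∀ i j, A i j = 0 ∨ A i j = 1)
    (hAsymm : A.IsSymm)
    (hAdiag : ∀ i, A i i = 0)
    (lam : ℝ) (hlam0 : 0 < lam) (hlam2 : lam < 2)
    (xstar : Fin n → ℝ)
    (hbox : ∀ j, xstar j ∈ Set.Icc (-1 : ℝ) 1)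
    (hloc : IsLocalMaxOn (fun y : Fin n → ℝ => -lam * (∑ j, y j) - y ⬝ᵥ A.mulVec y)
      {y : Fin n → ℝ | ∀ j, y j ∈ Set.Icc (-1 : ℝ) 1} xstar) :
    ∀ i : Fin n, xstar i = 1 ∨ xstar i = -1 := by
  set F : (Fin n → ℝ) → ℝ := fun y => -lam * (∑ j, y j) - y ⬝ᵥ A.mulVec y with hF
  set S : Set (Fin n → ℝ) := {y : Fin n → ℝ | ∀ j, y j ∈ Set.Icc (-1 : ℝ) 1} with hS
  -- symmetry of the quadratic form
  have hsym : ∀ u v : Fin n → ℝ, u ⬝ᵥ A.mulVec v = v ⬝ᵥ A.mulVec u := by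
    intro u v
    rw [Matrix.dotProduct_mulVec, ← Matrix.mulVec_transpose, hAsymm.eq, dotProduct_comm]
  -- expansion of F along a line
  have hexp : ∀ (d : Fin n → ℝ) (t : ℝ),
      F (xstar + t • d) = F xstar
        + t * (-lam * (∑ j, d j) - 2 * (d ⬝ᵥ A.mulVec xstar))
        - t ^ 2 * (d ⬝ᵥ A.mulVec d) := by
    intro d t
    have h1 : ∑ j, (xstar + t • d) j = (∑ j, xstar j) + t * ∑ j, d j := by
      simp [Finset.sum_add_distrib, Finset.mul_sum]
    have h2 : (xstar + t • d) ⬝ᵥ A.mulVec (xstar + t • d)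
        = xstar ⬝ᵥ A.mulVec xstar + 2 * t * (d ⬝ᵥ A.mulVec xstar)
          + t ^ 2 * (d ⬝ᵥ A.mulVec d) := by
      simp only [Matrix.mulVec_add, Matrix.mulVec_smul, dotProduct_add, add_dotProduct,
        dotProduct_smul, smul_dotProduct, smul_eq_mul, hsym xstar d]
      ring
    simp only [hF, h1, h2]
    ring
  -- pull back local maximality along a feasible line
  have hline : ∀ (d : Fin n → ℝ), (∃ ε > (0:ℝ), ∀ t : ℝ, |t| ≤ ε → xstar + t • d ∈ S) →
      ∃ δ > (0:ℝ), ∀ t : ℝ, |t| < δ → F (xstar + t • d) ≤ F xstar := by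
    intro d ⟨ε, hε, hfeas⟩
    have hcont : Filter.Tendsto (fun t : ℝ => xstar + t • d) (nhds 0) (nhds xstar) := by
      have hc : Continuous (fun t : ℝ => xstar + t • d) := by continuity
      have h0 : xstar + (0:ℝ) • d = xstar := by simp
      simpa [h0] using hc.tendsto 0
    have hmem : ∀ᶠ t : ℝ in nhds 0, xstar + t • d ∈ S := by
      rw [Metric.eventually_nhds_iff]
      exact ⟨ε, hε, fun t ht => hfeas t (by rw [Real.dist_eq, sub_zero] at ht; exact ht.le)⟩
    have htend : Filter.Tendsto (fun t : ℝ => xstar + t • d) (nhds 0) (nhdsWithin xstar S) :=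
      tendsto_nhdsWithin_iff.2 ⟨hcont, hmem⟩
    have hev : ∀ᶠ t : ℝ in nhds 0, F (xstar + t • d) ≤ F xstar := htend.eventually hloc
    rw [Metric.eventually_nhds_iff] at hev
    obtain ⟨δ, hδ, h⟩ := hev
    exact ⟨δ, hδ, fun t ht => h (by rw [Real.dist_eq, sub_zero]; exact ht)⟩
  -- first-order condition at interior coordinates
  have hfo : ∀ i : Fin n, -1 < xstar i → xstar i < 1 → A.mulVec xstar i = -lam / 2 := by
    intro i h1 h2
    set d : Fin n → ℝ := Pi.single i 1 with hd
    have hfeas : ∃ ε > (0:ℝ), ∀ t : ℝ, |t| ≤ ε → xstar + t • d ∈ S := by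
      refine ⟨min (1 - xstar i) (xstar i + 1),
        lt_min (by linarith) (by linarith), fun t ht => ?_⟩
      rcases abs_le.1 ht with ⟨hl, hr⟩
      have e1 : t ≤ 1 - xstar i := le_trans hr (min_le_left _ _)
      have e2 : -(xstar i + 1) ≤ t := le_trans (neg_le_neg (min_le_right _ _)) hl
      intro k
      by_cases hk : k = i
      · subst hk
        have hv : (xstar + t • d) k = xstar k + t := by
          simp [hd, Pi.single_eq_same]
        rw [hv, Set.mem_Icc]
        exact ⟨by linarith, by linarith⟩
      · have hv : (xstar + t • d) k = xstar k := by
          simp [hd, Pi.single_eq_of_ne hk]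
        rw [hv]; exact hbox k
    obtain ⟨δ, hδ, hub⟩ := hline d hfeas
    have hsum1 : (∑ j, d j) = 1 := by
      simp [hd, Finset.sum_pi_single']
    have hq : d ⬝ᵥ A.mulVec d = 0 := by
      simp [hd, Matrix.mulVec_single, single_dotProduct, hAdiag i]
    have hl : d ⬝ᵥ A.mulVec xstar = A.mulVec xstar i := by
      simp [hd, single_dotProduct]
    have key : ∀ t : ℝ, |t| < δ → t * (-lam - 2 * A.mulVec xstar i) ≤ 0 := by
      intro t ht
      have h := hub t ht
      rw [hexp, hsum1, hq, hl] at h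
      have : t * (-lam * 1 - 2 * A.mulVec xstar i) ≤ 0 := by linarith
      linarith [this, mul_one lam]
    set g : ℝ := -lam - 2 * A.mulVec xstar i with hg
    have hg0 : g = 0 := by
      rcases lt_trichotomy g 0 with h | h | h
      · have := key (-(δ/2)) (by rw [abs_neg, abs_of_pos (by linarith)]; linarith)
        nlinarith
      · exact h
      · have := key (δ/2) (by rw [abs_of_pos (by linarith)]; linarith)
        nlinarith
    rw [hg] at hg0; linarith
  -- main argument
  intro i
  by_contra hcon
  push_neg at hcon
  obtain ⟨hne1, hnem1⟩ := hcon
  obtain ⟨hbl, hbr⟩ := hbox i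
  have h1 : -1 < xstar i := lt_of_le_of_ne hbl (Ne.symm hnem1)
  have h2 : xstar i < 1 := lt_of_le_of_ne hbr hne1
  have hAxi : A.mulVec xstar i = -lam / 2 := hfo i h1 h2
  by_cases hedge : ∃ j : Fin n, A i j = 1 ∧ -1 < xstar j ∧ xstar j < 1
  · -- interior neighbor: second-order ascent direction
    obtain ⟨j, hAij, hj1, hj2⟩ := hedge
    have hij : j ≠ i := by
      intro h
      rw [h, hAdiag i] at hAij; norm_num at hAij
    have hAxj : A.mulVec xstar j = -lam / 2 := hfo j hj1 hj2
    have hAji : A j i = 1 := by rw [hAsymm.apply i j]; exact hAij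
    set d : Fin n → ℝ := Pi.single i 1 - Pi.single j 1 with hd
    have hfeas : ∃ ε > (0:ℝ), ∀ t : ℝ, |t| ≤ ε → xstar + t • d ∈ S := by
      obtain ⟨hjl, hjr⟩ := hbox j
      refine ⟨min (min (1 - xstar i) (xstar i + 1)) (min (1 - xstar j) (xstar j + 1)),
        lt_min (lt_min (by linarith) (by linarith)) (lt_min (by linarith) (by linarith)),
        fun t ht => ?_⟩
      rcases abs_le.1 ht with ⟨hl, hr⟩
      have e1 : t ≤ 1 - xstar i := le_trans hr (le_trans (min_le_left _ _) (min_le_left _ _))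
      have e2 : -(xstar i + 1) ≤ t :=
        le_trans (neg_le_neg (le_trans (min_le_left _ _) (min_le_right _ _))) hl
      have e3 : t ≤ 1 - xstar j := le_trans hr (le_trans (min_le_right _ _) (min_le_left _ _))
      have e4 : -(xstar j + 1) ≤ t :=
        le_trans (neg_le_neg (le_trans (min_le_right _ _) (min_le_right _ _))) hl
      have e5 : -(1 - xstar j) ≤ t :=
        le_trans (neg_le_neg (le_trans (min_le_right _ _) (min_le_left _ _))) hl
      have e6 : t ≤ xstar j + 1 := le_trans hr (le_trans (min_le_right _ _) (min_le_right _ _))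
      intro k
      by_cases hki : k = i
      · subst hki
        have hv : (xstar + t • d) k = xstar k + t := by
          simp [hd, Pi.single_eq_same, Pi.single_eq_of_ne (Ne.symm hij)]
        rw [hv, Set.mem_Icc]
        exact ⟨by linarith, by linarith⟩
      · by_cases hkj : k = j
        · subst hkj
          have hv : (xstar + t • d) k = xstar k - t := by
            simp [hd, Pi.single_eq_same, Pi.single_eq_of_ne hki]
            ring
          rw [hv, Set.mem_Icc]
          exact ⟨by linarith, by linarith⟩
        · have hv : (xstar + t • d) k = xstar k := by
            simp [hd, Pi.single_eq_of_ne hki, Pi.single_eq_of_ne hkj]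
          rw [hv]; exact hbox k
    obtain ⟨δ, hδ, hub⟩ := hline d hfeas
    have hthis := hub (δ/2) (by rw [abs_of_pos (by linarith)]; linarith)
    rw [hexp] at hthis
    have hsum : (∑ k, d k) = 0 := by
      simp [hd, Finset.sum_sub_distrib, Finset.sum_pi_single']
    have hlin : d ⬝ᵥ A.mulVec xstar = 0 := by
      simp [hd, sub_dotProduct, single_dotProduct, hAxi, hAxj]
    have hquad : d ⬝ᵥ A.mulVec d = -2 := by
      simp [hd, sub_dotProduct, Matrix.mulVec_sub, dotProduct_sub, single_dotProduct,
        Matrix.mulVec_single, hAdiag i, hAdiag j, hAij, hAji]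
      norm_num
    rw [hsum, hlin, hquad] at hthis
    have hpos : (0:ℝ) < (δ/2)^2 := pow_pos (by linarith) 2
    nlinarith [hthis, hpos]
  · -- no interior neighbor: (A x*)_i is an integer
    push_neg at hedge
    have hterm : ∀ j : Fin n, ∃ m : ℤ, A i j * xstar j = (m : ℝ) := by
      intro j
      rcases hA01 i j with h0 | h1'
      · exact ⟨0, by simp [h0]⟩
      · obtain ⟨hjl, hjr⟩ := hbox j
        have hnotint := hedge j h1'
        rcases eq_or_lt_of_le hjl with heq | hgt
        · exact ⟨-1, by simp [h1', ← heq]⟩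
        · have hx1 : xstar j = 1 := le_antisymm hjr (hnotint hgt)
          exact ⟨1, by simp [h1', hx1]⟩
    choose m hm using hterm
    have hint : A.mulVec xstar i = ((∑ j, m j : ℤ) : ℝ) := by
      rw [Matrix.mulVec, dotProduct]
      push_cast
      exact Finset.sum_congr rfl fun j _ => hm j
    rw [hAxi] at hint
    have hlb : (-1 : ℝ) < ((∑ j, m j : ℤ) : ℝ) := by rw [← hint]; linarith
    have hub2 : ((∑ j, m j : ℤ) : ℝ) < 0 := by rw [← hint]; linarith
    have hlb' : (-1 : ℤ) < ∑ j, m j := by exact_mod_cast hlb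
    have hub2' : (∑ j, m j) < (0 : ℤ) := by exact_mod_cast hub2
    omega
end
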